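/- arXiv:2309.10762 — 2 statements merged into one kernel-verified Lean document; each statement's English description precedes it below -/
import Mathlib

section
/- The sign-vector set of a hyperplane arrangement restricted to a chamber of a subarrangement yields a system satisfying face symmetry: let A be a finite set of affine hyperplanes in ℝⁿ, let K ⊆ ℝⁿ be an open convex set, and let L = {σ_A(v) : v ∈ K}, where σ_A(v) ∈ {-1,0,1}^A records the side of each hyperplane that v lies on. Then L satisfies (FS): for all X, Y ∈ L, X ∘ (−Y) ∈ L. -/
/-- Composition of sign vectors. -/
def comp {A : Type*} (X Y : A → SignType) : A → SignType := fun e => if X e = 0 then Y e else X e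

/-- Sign map of an arrangement given by affine functionals h_H(x) = ⟨a_H, x⟩ − b_H. -/
noncomputable def sigma {n : ℕ} {A : Type*} (a : A → (Fin n → ℝ)) (b : A → ℝ)
    (v : Fin n → ℝ) : A → SignType :=
  fun H => SignType.sign (∑ i, a H i * v i - b H)

theorem realizable_FS {n : ℕ} {A : Type*} [Fintype A]
    (a : A → (Fin n → ℝ)) (b : A → ℝ) (ha : ∀ H, a H ≠ 0)
    (K : Set (Fin n → ℝ)) (hKo : IsOpen K) (hKc : Convex ℝ K) :
    ∀ X ∈ sigma a b '' K, ∀ Y ∈ sigma a b '' K,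
      comp X (-Y) ∈ sigma a b '' K := by
  rintro X ⟨v, hv, rfl⟩ Y ⟨w, hw, rfl⟩
  set f : A → (Fin n → ℝ) → ℝ := fun H x => ∑ i, a H i * x i - b H with hf
  set p : ℝ → (Fin n → ℝ) := fun t => v + t • (v - w) with hp
  have hcont : Continuous p := by
    apply Continuous.add continuous_const
    exact continuous_id.smul continuous_const
  have hp0 : p 0 = v := by simp [hp]
  have hK : ∀ᶠ t in nhdsWithin 0 (Set.Ioi 0), p t ∈ K := by
    have h := hcont.continuousAt (x := (0:ℝ))
    have := h.preimage_mem_nhds (hKo.mem_nhds (by rw [hp0]; exact hv))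
    exact nhdsWithin_le_nhds this
  have key : ∀ H t, f H (p t) = f H v + t * (f H v - f H w) := by
    intro H t
    simp only [hf, hp, Pi.add_apply, Pi.smul_apply, Pi.sub_apply, smul_eq_mul]
    have : ∑ i, a H i * (v i + t * (v i - w i))
        = ∑ i, (a H i * v i + t * (a H i * v i - a H i * w i)) := by
      apply Finset.sum_congr rfl; intros; ring
    rw [this, Finset.sum_add_distrib, ← Finset.mul_sum, Finset.sum_sub_distrib]
    ring
  have hsig : ∀ u, sigma a b u = fun H => SignType.sign (f H u) := fun u => rfl
  have hH : ∀ H, ∀ᶠ t in nhdsWithin 0 (Set.Ioi 0),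
      SignType.sign (f H (p t)) = comp (sigma a b v) (-(sigma a b w)) H := by
    intro H
    by_cases h0 : f H v = 0
    · have hs : sigma a b v H = 0 := by
        rw [hsig v]; simpa [sign_eq_zero_iff] using h0
      filter_upwards [self_mem_nhdsWithin] with t ht
      simp only [comp, hs, if_pos rfl, Pi.neg_apply, hsig w]
      rw [key H t, h0]
      have : (0:ℝ) + t * (0 - f H w) = t * (-(f H w)) := by ring
      rw [this, sign_mul, sign_pos ht, Left.sign_neg, one_mul]
      simp
    · have hs : sigma a b v H ≠ 0 := by
        rw [hsig v]; simpa [sign_eq_zero_iff] using h0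
      have htend : Filter.Tendsto (fun t => f H (p t)) (nhdsWithin 0 (Set.Ioi 0)) (nhds (f H v)) := by
        have hc : Continuous fun t : ℝ => f H v + t * (f H v - f H w) := by
          apply Continuous.add continuous_const
          exact continuous_id.mul continuous_const
        have h1 : Filter.Tendsto (fun t : ℝ => f H v + t * (f H v - f H w))
            (nhdsWithin 0 (Set.Ioi 0)) (nhds (f H v)) := by
          have := (hc.tendsto 0).mono_left (nhdsWithin_le_nhds (s := Set.Ioi 0))
          simpa using this
        simpa only [key] using h1
      rcases lt_or_gt_of_ne h0 with hneg | hpos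
      · have hev : ∀ᶠ t in nhdsWithin 0 (Set.Ioi 0), f H (p t) < 0 :=
          htend.eventually_lt_const hneg
        filter_upwards [hev] with t ht
        simp only [comp, if_neg hs, hsig v]
        rw [sign_neg ht, sign_neg hneg]
        simp
      · have hev : ∀ᶠ t in nhdsWithin 0 (Set.Ioi 0), 0 < f H (p t) :=
          htend.eventually_const_lt hpos
        filter_upwards [hev] with t ht
        simp only [comp, if_neg hs, hsig v]
        rw [sign_pos ht, sign_pos hpos]
        simp
  have hall := (Filter.eventually_all.2 hH).and hK
  obtain ⟨t, ht1, ht2⟩ := hall.exists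
  exact ⟨p t, ht2, funext fun H => ht1 H⟩
end

section
/- For v, w ∈ ℝⁿ with sign vectors X = σ_A(v) and Y = σ_A(w) with respect to a finite hyperplane arrangement A, there exists t₀ > 0 such that for all t ∈ (0, t₀), σ_A((1−t)v + t w) = X ∘ Y. -/
lemma sign_add_of_abs_lt {x y : ℝ} (h : |y| < |x|) :
    SignType.sign (x + y) = SignType.sign x := by
  rcases lt_trichotomy x 0 with hx | hx | hx
  · have h1 : y < -x := by
      calc y ≤ |y| := le_abs_self y
        _ < |x| := h
        _ = -x := abs_of_neg hx
    have : x + y < 0 := by linarith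
    rw [sign_neg this, sign_neg hx]
  · subst hx
    simp only [abs_zero] at h
    exact absurd h (abs_nonneg y).not_gt
  · have h1 : -x < y := by
      have h2 : -y ≤ |y| := neg_le_abs y
      have h3 : |x| = x := abs_of_pos hx
      linarith
    have : 0 < x + y := by linarith
    rw [sign_pos this, sign_pos hx]

theorem sign_of_segment {n : ℕ} {A : Type*} [Fintype A]
    (a : A → (Fin n → ℝ)) (b : A → ℝ) (ha : ∀ H, a H ≠ 0)
    (v w : Fin n → ℝ) :
    ∃ t₀ > (0 : ℝ), ∀ t : ℝ, 0 < t → t < t₀ →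
      sigma a b ((1 - t) • v + t • w) = comp (sigma a b v) (sigma a b w) := by
  classical
  set c : A → ℝ := fun H => ∑ i, a H i * v i - b H with hc
  set d : A → ℝ := fun H => ∑ i, a H i * w i - b H with hd
  set ε : A → ℝ := fun H => if h : c H ≠ 0 ∧ d H ≠ c H then |c H| / |d H - c H| else 1 with hε
  have hεpos : ∀ H, 0 < ε H := by
    intro H
    simp only [hε]
    split_ifs with h
    · exact div_pos (abs_pos.mpr h.1) (abs_pos.mpr (sub_ne_zero.mpr h.2))
    · norm_num
  set S : Finset ℝ := insert 1 (Finset.image ε Finset.univ) with hS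
  have hSne : S.Nonempty := ⟨1, Finset.mem_insert_self _ _⟩
  refine ⟨S.min' hSne, ?_, ?_⟩
  · rw [gt_iff_lt, Finset.lt_min'_iff]
    intro y hy
    rcases Finset.mem_insert.mp hy with h | h
    · rw [h]; norm_num
    · obtain ⟨H, _, hH⟩ := Finset.mem_image.mp h
      rw [← hH]; exact hεpos H
  · intro t ht htlt
    funext H
    have hlin : ∑ i, a H i * ((1 - t) • v + t • w) i - b H = c H + t * (d H - c H) := by
      have hsum : ∑ i, a H i * ((1 - t) * v i + t * w i)
          = (1 - t) * ∑ i, a H i * v i + t * ∑ i, a H i * w i := by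
        rw [Finset.mul_sum, Finset.mul_sum, ← Finset.sum_add_distrib]
        exact Finset.sum_congr rfl fun i _ => by ring
      simp only [Pi.add_apply, Pi.smul_apply, smul_eq_mul, hsum, hc, hd]
      ring
    have htε : t < ε H := lt_of_lt_of_le htlt (Finset.min'_le _ _
      (Finset.mem_insert_of_mem (Finset.mem_image_of_mem ε (Finset.mem_univ H))))
    show SignType.sign (∑ i, a H i * ((1 - t) • v + t • w) i - b H)
        = if SignType.sign (c H) = 0 then SignType.sign (d H) else SignType.sign (c H)
    rw [hlin]
    by_cases hcH : c H = 0
    · rw [hcH]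
      simp only [sign_zero, if_pos rfl, zero_add, sub_zero]
      rw [sign_mul, sign_pos ht, one_mul, if_pos trivial]
    · rw [if_neg (fun hs => hcH (sign_eq_zero_iff.mp hs))]
      by_cases hdc : d H = c H
      · simp [hdc]
      · apply sign_add_of_abs_lt
        rw [abs_mul, abs_of_pos ht]
        have hdcne : (0:ℝ) < |d H - c H| := abs_pos.mpr (sub_ne_zero.mpr hdc)
        have hεeq : ε H = |c H| / |d H - c H| := by rw [hε]; simp [hcH, hdc]
        rw [hεeq] at htε
        calc t * |d H - c H| < (|c H| / |d H - c H|) * |d H - c H| :=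
              mul_lt_mul_of_pos_right htε hdcne
          _ = |c H| := div_mul_cancel₀ _ hdcne.ne'
end
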